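/- The sum_digits cost function satisfies the base-product-equivalence property: if B₁ and B₂ are bases with ∏B₁ = ∏B₂ and ∂cost_S(B₁) + h_S(B₁) ≤ ∂cost_S(B₂) + h_S(B₂), then for every common extension sequence C, sum_digits(S_{(B₁C)}) ≤ sum_digits(S_{(B₂C)}). -/

import Mathlib

/-- The weight of digit position `i` in mixed radix base `B`: product of the first `i` radices. -/
def weight (B : List ℕ) (i : ℕ) : ℕ := (B.take i).prod

/-- The `i`-th digit of `v` in mixed radix base `B` (the most significant digit, at
position `B.length`, is `v / B.prod` and is unbounded). -/
def digit (B : List ℕ) (v i : ℕ) : ℕ :=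
  if i < B.length then (v / weight B i) % B.getD i 1 else v / B.prod

/-- The sum of the digits of `v` in base `B`. -/
def digitSum (B : List ℕ) (v : ℕ) : ℕ :=
  ∑ i ∈ Finset.range (B.length + 1), digit B v i

/-- The sum of digits of all elements of the multiset `S` in base `B`. -/
def sumDigits (S : Multiset ℕ) (B : List ℕ) : ℕ :=
  (S.map (digitSum B)).sum

/-- The sum of most significant digits of the elements of `S` in base `B`. -/
def msdSum (S : Multiset ℕ) (B : List ℕ) : ℕ := (S.map (fun v => v / B.prod)).sum

/-- Partial cost for the `sum_digits` cost function: `cost_S(B) - Σ msd(S_(B))`. -/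
def partialCost (S : Multiset ℕ) (B : List ℕ) : ℕ := sumDigits S B - msdSum S B

/-- Heuristic `h_S(B) = |{x ∈ S : x ≥ ∏B}|`. -/
def heur (S : Multiset ℕ) (B : List ℕ) : ℕ := (S.filter (fun x => B.prod ≤ x)).card

/-- `cost^α_S(B) = ∂cost_S(B) + h_S(B)`. -/
def costAlpha (S : Multiset ℕ) (B : List ℕ) : ℕ := partialCost S B + heur S B

lemma digit_append_left (B C : List ℕ) (v i : ℕ) (hi : i < B.length) :
    digit (B ++ C) v i = digit B v i := by
  unfold digit weight
  have h1 : i < (B ++ C).length := by simp; omega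
  rw [if_pos h1, if_pos hi, List.take_append_of_le_length (le_of_lt hi),
    List.getD_append _ _ _ _ hi]

lemma digit_append_right (B C : List ℕ) (v j : ℕ) (hj : j ≤ C.length) :
    digit (B ++ C) v (B.length + j) = digit C (v / B.prod) j := by
  unfold digit weight
  rcases lt_or_eq_of_le hj with h | h
  · have h1 : B.length + j < (B ++ C).length := by simp; omega
    rw [if_pos h1, if_pos h, List.take_append, List.prod_append,
      List.getD_append_right _ _ _ _ (Nat.le_add_right _ _)]
    simp [Nat.div_div_eq_div_mul, List.take_of_length_le (Nat.le_add_right B.length j)]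
  · have h1 : ¬ B.length + j < (B ++ C).length := by simp; omega
    rw [if_neg h1, if_neg (by omega), List.prod_append, Nat.div_div_eq_div_mul]

lemma digitSum_append (B C : List ℕ) (v : ℕ) :
    digitSum (B ++ C) v + v / B.prod = digitSum B v + digitSum C (v / B.prod) := by
  unfold digitSum
  rw [List.length_append,
    show B.length + C.length + 1 = B.length + (C.length + 1) from by omega,
    Finset.sum_range_add]
  have e1 : ∀ i ∈ Finset.range B.length, digit (B ++ C) v i = digit B v i := by
    intro i hi
    exact digit_append_left B C v i (Finset.mem_range.mp hi)
  have e2 : ∀ j ∈ Finset.range (C.length + 1),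
      digit (B ++ C) v (B.length + j) = digit C (v / B.prod) j := by
    intro j hj
    exact digit_append_right B C v j (by have := Finset.mem_range.mp hj; omega)
  rw [Finset.sum_congr rfl e1, Finset.sum_congr rfl e2,
    show ∑ i ∈ Finset.range (B.length + 1), digit B v i
      = ∑ i ∈ Finset.range B.length, digit B v i + digit B v B.length from
      Finset.sum_range_succ _ _]
  have hd : digit B v B.length = v / B.prod := by unfold digit; simp
  rw [hd]
  exact Nat.add_right_comm _ _ _

lemma msd_le_digitSum (B : List ℕ) (v : ℕ) : v / B.prod ≤ digitSum B v := by
  unfold digitSum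
  have : digit B v B.length = v / B.prod := by unfold digit; simp
  calc v / B.prod = digit B v B.length := this.symm
    _ ≤ _ := Finset.single_le_sum (fun i _ => Nat.zero_le _) (by simp)

lemma msdSum_le_sumDigits (S : Multiset ℕ) (B : List ℕ) :
    msdSum S B ≤ sumDigits S B :=
  Multiset.sum_map_le_sum_map _ _ (fun v _ => msd_le_digitSum B v)

lemma sumDigits_append (S : Multiset ℕ) (B C : List ℕ) :
    sumDigits S (B ++ C) = partialCost S B + sumDigits (S.map (· / B.prod)) C := by
  have key : sumDigits S (B ++ C) + msdSum S B
      = sumDigits S B + sumDigits (S.map (· / B.prod)) C := by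
    unfold sumDigits msdSum
    rw [Multiset.map_map, ← Multiset.sum_map_add, ← Multiset.sum_map_add]
    exact congrArg _ (Multiset.map_congr rfl (fun v _ => digitSum_append B C v))
  have := msdSum_le_sumDigits S B
  unfold partialCost
  omega

theorem stmt15 (S : Multiset ℕ) (B₁ B₂ : List ℕ)
    (h₁ : ∀ x ∈ B₁, 2 ≤ x) (h₂ : ∀ x ∈ B₂, 2 ≤ x)
    (hprod : B₁.prod = B₂.prod)
    (hcost : costAlpha S B₁ ≤ costAlpha S B₂) :
    ∀ C : List ℕ, (∀ x ∈ C, 2 ≤ x) →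
      sumDigits S (B₁ ++ C) ≤ sumDigits S (B₂ ++ C) := by
  intro C hC
  rw [sumDigits_append, sumDigits_append, hprod]
  have hh : heur S B₁ = heur S B₂ := by unfold heur; rw [hprod]
  unfold costAlpha at hcost
  omega
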